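/- Let G be a cubic graph with three edges x₁x₂, y₁y₂, z₁z₂ (where x₁, y₁, z₁ are pairwise distinct and x₂, y₂, z₂ are pairwise distinct) such that deleting these three edges leaves exactly two connected components G₁ (containing x₁, y₁, z₁) and G₂ (containing x₂, y₂, z₂), each with at least four vertices. For i = 1, 2, let G_i' be obtained from G_i by adding a new vertex g_i joined to x_i, y_i, z_i, and let G_i'' be obtained from G_i by adding three new vertices x_i', y_i', z_i' forming a triangle together with the edges x_i x_i', y_i y_i', z_i z_i'. If the squares (G₁')², (G₂')², (G₁'')², and (G₂'')² are all 7-colorable, then G² is 7-colorable. -/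

import Mathlib

/-- The square of a graph: two distinct vertices are adjacent iff their
distance in `G` is at most 2 (adjacent, or having a common neighbor). -/
def graphSquare {V : Type*} (G : SimpleGraph V) : SimpleGraph V where
  Adj u v := u ≠ v ∧ (G.Adj u v ∨ ∃ w, G.Adj u w ∧ G.Adj w v)
  symm := by
    refine ⟨?_⟩
    rintro u v ⟨hne, h | ⟨w, h1, h2⟩⟩
    · exact ⟨hne.symm, Or.inl h.symm⟩
    · exact ⟨hne.symm, Or.inr ⟨w, h2.symm, h1.symm⟩⟩
  loopless := by refine ⟨?_⟩; rintro u ⟨hne, -⟩; exact hne rfl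

/-- The graph obtained from `H` by adding one new vertex joined to the
vertices in `T`. -/
def addVertex {α : Type*} (H : SimpleGraph α) (T : Set α) : SimpleGraph (Option α) where
  Adj u v :=
    match u, v with
    | some p, some q => H.Adj p q
    | some p, none => p ∈ T
    | none, some q => q ∈ T
    | none, none => False
  symm := by
    refine ⟨?_⟩
    rintro (_ | p) (_ | q) h
    · exact h.elim
    · exact h
    · exact h
    · exact H.adj_symm h
  loopless := by
    refine ⟨?_⟩
    rintro (_ | p) h
    · exact h.elim
    · exact H.irrefl h

/-- The graph obtained from `H` by adding a new triangle on three new vertices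
`0, 1, 2`, joined by a matching to the vertices `a`, `b`, `c` respectively. -/
def addTriangle {α : Type*} (H : SimpleGraph α) (a b c : α) :
    SimpleGraph (α ⊕ Fin 3) where
  Adj u v :=
    match u, v with
    | .inl p, .inl q => H.Adj p q
    | .inr i, .inr j => i ≠ j
    | .inl p, .inr i => (i = 0 ∧ p = a) ∨ (i = 1 ∧ p = b) ∨ (i = 2 ∧ p = c)
    | .inr i, .inl p => (i = 0 ∧ p = a) ∨ (i = 1 ∧ p = b) ∨ (i = 2 ∧ p = c)
  symm := by
    refine ⟨?_⟩
    rintro (p | i) (q | j) h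
    · exact H.adj_symm h
    · exact h
    · exact h
    · exact h.symm
  loopless := by
    refine ⟨?_⟩
    rintro (p | i) h
    · exact H.irrefl h
    · exact h rfl


lemma perm_extend {α : Type*} [DecidableEq α] :
    ∀ (l : List (α × α)), (l.map Prod.fst).Nodup → (l.map Prod.snd).Nodup →
      ∃ π : Equiv.Perm α, ∀ p ∈ l, π p.1 = p.2
  | [], _, _ => ⟨1, by simp⟩
  | (a, b) :: t, h₁, h₂ => by
    simp only [List.map_cons, List.nodup_cons, List.mem_map] at h₁ h₂
    obtain ⟨π, hπ⟩ := perm_extend t h₁.2 h₂.2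
    refine ⟨(Equiv.swap b (π a)) * π, ?_⟩
    rintro ⟨a', b'⟩ hmem
    rcases List.mem_cons.mp hmem with h | h
    · obtain ⟨rfl, rfl⟩ := Prod.mk.injEq .. ▸ h
      simp [Equiv.swap_apply_right]
    · have ha' : a' ≠ a := by
        rintro rfl; exact h₁.1 ⟨(a', b'), h, rfl⟩
      have hb' : π a' = b' := hπ _ h
      have h1 : b' ≠ b := by rintro rfl; exact h₂.1 ⟨(a', b'), h, rfl⟩
      have h2 : b' ≠ π a := by
        rw [← hb']; exact fun hc => ha' (π.injective hc)
      simp only [Equiv.Perm.mul_apply, hb']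
      exact Equiv.swap_apply_of_ne_of_ne h1 h2

lemma fresh_color (s : Finset (Fin 7)) (h : s.card < 7) : ∃ a, a ∉ s := by
  by_contra hc
  push_neg at hc
  have : (Finset.univ : Finset (Fin 7)) ⊆ s := fun a _ => hc a
  have := Finset.card_le_card this
  simp at this
  omega
lemma card_le_six (a b c d e f : Fin 7) :
    ({a, b, c, d, e, f} : Finset (Fin 7)).card ≤ 6 := by
  refine le_trans (Finset.card_insert_le _ _) (Nat.succ_le_succ ?_)
  refine le_trans (Finset.card_insert_le _ _) (Nat.succ_le_succ ?_)
  refine le_trans (Finset.card_insert_le _ _) (Nat.succ_le_succ ?_)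
  refine le_trans (Finset.card_insert_le _ _) (Nat.succ_le_succ ?_)
  refine le_trans (Finset.card_insert_le _ _) (Nat.succ_le_succ ?_)
  simp

lemma nodup6 {a b c d e f : Fin 7} (h1 : a≠b) (h2 : a≠c) (h3 : a≠d) (h4 : a≠e)
    (h5 : a≠f) (h6 : b≠c) (h7 : b≠d) (h8 : b≠e) (h9 : b≠f) (h10 : c≠d)
    (h11 : c≠e) (h12 : c≠f) (h13 : d≠e) (h14 : d≠f) (h15 : e≠f) :
    ([a, b, c, d, e, f] : List (Fin 7)).Nodup := by
  simp_all [List.nodup_cons]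

lemma nodup5 {a b c d e : Fin 7} (h1 : a≠b) (h2 : a≠c) (h3 : a≠d) (h4 : a≠e)
    (h6 : b≠c) (h7 : b≠d) (h8 : b≠e) (h10 : c≠d) (h11 : c≠e) (h13 : d≠e) :
    ([a, b, c, d, e] : List (Fin 7)).Nodup := by
  simp_all [List.nodup_cons]

lemma nodup4 {a b c d : Fin 7} (h1 : a≠b) (h2 : a≠c) (h3 : a≠d)
    (h6 : b≠c) (h7 : b≠d) (h10 : c≠d) :
    ([a, b, c, d] : List (Fin 7)).Nodup := by
  simp_all [List.nodup_cons]

lemma fresh_avoid {V : Type*} {G G'' : SimpleGraph V}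
    (hsub : ∀ a b : V, G''.Adj a b → G.Adj a b)
    {p₁ p₂ : V} (hcub : {w | G.Adj p₂ w}.ncard = 3)
    {S : Set V} (c : S → Fin 7) (hadj : G.Adj p₂ p₁)
    (hp₂ : p₂ ∈ S) (hp₁ : p₁ ∉ S) (q₁ q₂ q₃ : Fin 7) :
    ∃ t : Fin 7, t ≠ q₁ ∧ t ≠ q₂ ∧ t ≠ q₃ ∧
      ∀ v : S, (↑v = p₂ ∨ G''.Adj p₂ ↑v) → t ≠ c v := by
  classical
  obtain ⟨w1, w2, w3, h12, h13, h23, hset⟩ := Set.ncard_eq_three.mp hcub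
  have hmem : ∀ w : V, G.Adj p₂ w → w = w1 ∨ w = w2 ∨ w = w3 := by
    intro w hw
    have : w ∈ ({w1, w2, w3} : Set V) := hset ▸ hw
    simpa using this
  have hp1mem : p₁ = w1 ∨ p₁ = w2 ∨ p₁ = w3 := hmem p₁ hadj
  -- define the value of c at each neighbor (junk q₁ if outside S)
  set e : V → Fin 7 := fun w => if h : w ∈ S then c ⟨w, h⟩ else q₁ with he
  have hval : ∀ (w : V) (v : S), ↑v = w → e w = c v := by
    intro w v hv
    subst hv
    simp only [he, dif_pos v.2]
  have main : ∀ wa wb : V, (∀ v : S, G''.Adj p₂ ↑v → ↑v = p₁ ∨ ↑v = wa ∨ ↑v = wb) →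
      ∃ t : Fin 7, t ≠ q₁ ∧ t ≠ q₂ ∧ t ≠ q₃ ∧
        ∀ v : S, (↑v = p₂ ∨ G''.Adj p₂ ↑v) → t ≠ c v := by
    intro wa wb hnb
    obtain ⟨t, ht⟩ := fresh_color {q₁, q₂, q₃, c ⟨p₂, hp₂⟩, e wa, e wb}
      (lt_of_le_of_lt (card_le_six _ _ _ _ _ _) (by norm_num))
    simp only [Finset.mem_insert, Finset.mem_singleton, not_or] at ht
    obtain ⟨t1, t2, t3, t4, t5, t6⟩ := ht
    refine ⟨t, t1, t2, t3, ?_⟩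
    rintro v (hv | hv)
    · rw [← hval p₂ v hv]
      simp only [he, dif_pos hp₂]
      exact t4
    · rcases hnb v hv with h | h | h
      · exact absurd (h ▸ v.2) hp₁
      · rw [← hval wa v h]; exact t5
      · rw [← hval wb v h]; exact t6
  rcases hp1mem with h | h | h
  · refine main w2 w3 ?_
    intro v hv
    rcases hmem ↑v (hsub _ _ hv) with h' | h' | h'
    · exact Or.inl (h'.trans h.symm)
    · exact Or.inr (Or.inl h')
    · exact Or.inr (Or.inr h')
  · refine main w1 w3 ?_
    intro v hv
    rcases hmem ↑v (hsub _ _ hv) with h' | h' | h'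
    · exact Or.inr (Or.inl h')
    · exact Or.inl (h'.trans h.symm)
    · exact Or.inr (Or.inr h')
  · refine main w1 w2 ?_
    intro v hv
    rcases hmem ↑v (hsub _ _ hv) with h' | h' | h'
    · exact Or.inr (Or.inl h')
    · exact Or.inr (Or.inr h')
    · exact Or.inl (h'.trans h.symm)
section Gadget
variable {α : Type*} (H : SimpleGraph α) (a b c : α)

lemma tri_adj_ghost_a : (addTriangle H a b c).Adj (.inr 0) (.inl a) := by
  show (_ ∧ _) ∨ _; exact Or.inl ⟨rfl, rfl⟩

lemma tri_adj_ghost_b : (addTriangle H a b c).Adj (.inr 1) (.inl b) := by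
  show _ ∨ (_ ∧ _) ∨ _; exact Or.inr (Or.inl ⟨rfl, rfl⟩)

lemma tri_adj_ghost_c : (addTriangle H a b c).Adj (.inr 2) (.inl c) := by
  show _ ∨ _ ∨ (_ ∧ _); exact Or.inr (Or.inr ⟨rfl, rfl⟩)

lemma tri_adj_ghosts {i j : Fin 3} (h : i ≠ j) :
    (addTriangle H a b c).Adj (.inr i) (.inr j) := h

lemma tri_adj_inl {p q : α} (h : H.Adj p q) :
    (addTriangle H a b c).Adj (.inl p) (.inl q) := h

-- square: ghost i vs any of the three boundary vertices
lemma tri_sq_ghost_boundary (i : Fin 3) (p : α) (hp : p = a ∨ p = b ∨ p = c) :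
    (graphSquare (addTriangle H a b c)).Adj (.inr i) (.inl p) := by
  refine ⟨by simp, ?_⟩
  have key : ∀ j : Fin 3, ∀ q, (addTriangle H a b c).Adj (.inr j) (.inl q) →
      (addTriangle H a b c).Adj (.inr i) (.inl q) ∨
      ∃ w, (addTriangle H a b c).Adj (.inr i) w ∧ (addTriangle H a b c).Adj w (.inl q) := by
    intro j q hj
    by_cases hij : i = j
    · exact Or.inl (hij ▸ hj)
    · exact Or.inr ⟨.inr j, tri_adj_ghosts H a b c hij, hj⟩
  rcases hp with rfl | rfl | rfl
  · exact key 0 p (tri_adj_ghost_a H p b c)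
  · exact key 1 p (tri_adj_ghost_b H a p c)
  · exact key 2 p (tri_adj_ghost_c H a b p)

-- square: ghost 0 vs closed neighborhood of a, etc.
lemma tri_sq_ghost_nbhd_a {u : α} (hu : u = a ∨ H.Adj a u) :
    (graphSquare (addTriangle H a b c)).Adj (.inr 0) (.inl u) := by
  rcases hu with rfl | hu
  · exact tri_sq_ghost_boundary H u b c 0 u (Or.inl rfl)
  · exact ⟨by simp, Or.inr ⟨.inl a, tri_adj_ghost_a H a b c, hu⟩⟩

lemma tri_sq_ghost_nbhd_b {u : α} (hu : u = b ∨ H.Adj b u) :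
    (graphSquare (addTriangle H a b c)).Adj (.inr 1) (.inl u) := by
  rcases hu with rfl | hu
  · exact tri_sq_ghost_boundary H a u c 1 u (Or.inr (Or.inl rfl))
  · exact ⟨by simp, Or.inr ⟨.inl b, tri_adj_ghost_b H a b c, hu⟩⟩

lemma tri_sq_ghost_nbhd_c {u : α} (hu : u = c ∨ H.Adj c u) :
    (graphSquare (addTriangle H a b c)).Adj (.inr 2) (.inl u) := by
  rcases hu with rfl | hu
  · exact tri_sq_ghost_boundary H a b u 2 u (Or.inr (Or.inr rfl))
  · exact ⟨by simp, Or.inr ⟨.inl c, tri_adj_ghost_c H a b c, hu⟩⟩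

lemma tri_sq_ghosts {i j : Fin 3} (h : i ≠ j) :
    (graphSquare (addTriangle H a b c)).Adj (.inr i) (.inr j) :=
  ⟨by simp [h], Or.inl (tri_adj_ghosts H a b c h)⟩

lemma tri_sq_mono {u v : α} (h : (graphSquare H).Adj u v) :
    (graphSquare (addTriangle H a b c)).Adj (.inl u) (.inl v) := by
  obtain ⟨hne, h | ⟨w, h1, h2⟩⟩ := h
  · exact ⟨by simp [hne], Or.inl h⟩
  · exact ⟨by simp [hne], Or.inr ⟨.inl w, h1, h2⟩⟩

end Gadget

section GadgetV
variable {α : Type*} (H : SimpleGraph α) (T : Set α)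

lemma av_adj_ghost {p : α} (hp : p ∈ T) : (addVertex H T).Adj none (some p) := hp

lemma av_adj_some {p q : α} (h : H.Adj p q) : (addVertex H T).Adj (some p) (some q) := h

lemma av_sq_ghost_nbhd {p u : α} (hp : p ∈ T) (hu : u = p ∨ H.Adj p u) :
    (graphSquare (addVertex H T)).Adj none (some u) := by
  rcases hu with rfl | hu
  · exact ⟨by simp, Or.inl (av_adj_ghost H T hp)⟩
  · exact ⟨by simp, Or.inr ⟨some p, av_adj_ghost H T hp, hu⟩⟩

lemma av_sq_boundary {p q : α} (hp : p ∈ T) (hq : q ∈ T) (hne : p ≠ q) :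
    (graphSquare (addVertex H T)).Adj (some p) (some q) := by
  refine ⟨by simp [hne], Or.inr ⟨none, ?_, av_adj_ghost H T hq⟩⟩
  exact (addVertex H T).adj_symm (av_adj_ghost H T hp)

lemma av_sq_mono {u v : α} (h : (graphSquare H).Adj u v) :
    (graphSquare (addVertex H T)).Adj (some u) (some v) := by
  obtain ⟨hne, h | ⟨w, h1, h2⟩⟩ := h
  · exact ⟨by simp [hne], Or.inl h⟩
  · exact ⟨by simp [hne], Or.inr ⟨some w, h1, h2⟩⟩

end GadgetV
section Glue
variable {V : Type*} {G G' : SimpleGraph V} {x₁ x₂ y₁ y₂ z₁ z₂ : V}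

lemma cut_edge
    (hG' : G' = G.deleteEdges {s(x₁, x₂), s(y₁, y₂), s(z₁, z₂)})
    (hsep : ¬ G'.Reachable x₁ x₂)
    (hy2 : G'.Reachable y₂ x₂) (hz2 : G'.Reachable z₂ x₂)
    {a b : V} (hadj : G.Adj a b) (ha : G'.Reachable a x₁) (hb : ¬ G'.Reachable b x₁) :
    (a = x₁ ∧ b = x₂) ∨ (a = y₁ ∧ b = y₂) ∨ (a = z₁ ∧ b = z₂) := by
  have hx2 : ¬ G'.Reachable x₂ x₁ := fun h => hsep h.symm
  have hy2' : ¬ G'.Reachable y₂ x₁ := fun h => hsep (h.symm.trans hy2)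
  have hz2' : ¬ G'.Reachable z₂ x₁ := fun h => hsep (h.symm.trans hz2)
  have hne : ¬ G'.Adj a b := fun h => hb ((h.symm.reachable).trans ha)
  rw [hG', SimpleGraph.deleteEdges_adj] at hne
  push_neg at hne
  have hmem := hne hadj
  simp only [Set.mem_insert_iff, Set.mem_singleton_iff, Sym2.eq_iff] at hmem
  rcases hmem with (⟨rfl, rfl⟩ | ⟨rfl, rfl⟩) | (⟨rfl, rfl⟩ | ⟨rfl, rfl⟩) |
    (⟨rfl, rfl⟩ | ⟨rfl, rfl⟩)
  · exact Or.inl ⟨rfl, rfl⟩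
  · exact absurd ha hx2
  · exact Or.inr (Or.inl ⟨rfl, rfl⟩)
  · exact absurd ha hy2'
  · exact Or.inr (Or.inr ⟨rfl, rfl⟩)
  · exact absurd ha hz2'

lemma inside_edge
    (hG' : G' = G.deleteEdges {s(x₁, x₂), s(y₁, y₂), s(z₁, z₂)})
    (hsep : ¬ G'.Reachable x₁ x₂)
    (hy1 : G'.Reachable y₁ x₁) (hz1 : G'.Reachable z₁ x₁)
    (hy2 : G'.Reachable y₂ x₂) (hz2 : G'.Reachable z₂ x₂)
    {a b : V} (hadj : G.Adj a b)
    (hab : (G'.Reachable a x₁ ∧ G'.Reachable b x₁) ∨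
           (G'.Reachable a x₂ ∧ G'.Reachable b x₂)) :
    G'.Adj a b := by
  rw [hG', SimpleGraph.deleteEdges_adj]
  refine ⟨hadj, fun hmem => ?_⟩
  have hx2 : ¬ G'.Reachable x₂ x₁ := fun h => hsep h.symm
  have hy2' : ¬ G'.Reachable y₂ x₁ := fun h => hsep (h.symm.trans hy2)
  have hz2' : ¬ G'.Reachable z₂ x₁ := fun h => hsep (h.symm.trans hz2)
  have hx1 : ¬ G'.Reachable x₁ x₂ := hsep
  have hy1' : ¬ G'.Reachable y₁ x₂ := fun h => hsep (hy1.symm.trans h)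
  have hz1' : ¬ G'.Reachable z₁ x₂ := fun h => hsep (hz1.symm.trans h)
  simp only [Set.mem_insert_iff, Set.mem_singleton_iff, Sym2.eq_iff] at hmem
  rcases hmem with (⟨rfl, rfl⟩ | ⟨rfl, rfl⟩) | (⟨rfl, rfl⟩ | ⟨rfl, rfl⟩) |
    (⟨rfl, rfl⟩ | ⟨rfl, rfl⟩) <;>
    rcases hab with ⟨h1, h2⟩ | ⟨h1, h2⟩ <;> tauto

lemma glue
    (h1xy : x₁ ≠ y₁) (h1xz : x₁ ≠ z₁) (h1yz : y₁ ≠ z₁)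
    (h2xy : x₂ ≠ y₂) (h2xz : x₂ ≠ z₂) (h2yz : y₂ ≠ z₂)
    (hG' : G' = G.deleteEdges {s(x₁, x₂), s(y₁, y₂), s(z₁, z₂)})
    (hsep : ¬ G'.Reachable x₁ x₂)
    (hall : ∀ u : V, G'.Reachable u x₁ ∨ G'.Reachable u x₂)
    (hy1 : G'.Reachable y₁ x₁) (hz1 : G'.Reachable z₁ x₁)
    (hy2 : G'.Reachable y₂ x₂) (hz2 : G'.Reachable z₂ x₂)
    (c₁ : {u | G'.Reachable u x₁} → Fin 7)
    (c₂ : {u | G'.Reachable u x₂} → Fin 7)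
    (ι : Fin 7 → Fin 7) (hι : Function.Injective ι)
    (H1 : ∀ u v, (graphSquare (G'.induce {u | G'.Reachable u x₁})).Adj u v → c₁ u ≠ c₁ v)
    (H2 : ∀ u v, (graphSquare (G'.induce {u | G'.Reachable u x₂})).Adj u v → c₂ u ≠ c₂ v)
    (H3x : ∀ u : {u | G'.Reachable u x₁}, (↑u = x₁ ∨ G'.Adj x₁ ↑u) →
      c₁ u ≠ ι (c₂ ⟨x₂, SimpleGraph.Reachable.refl x₂⟩))
    (H3y : ∀ u : {u | G'.Reachable u x₁}, (↑u = y₁ ∨ G'.Adj y₁ ↑u) →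
      c₁ u ≠ ι (c₂ ⟨y₂, hy2⟩))
    (H3z : ∀ u : {u | G'.Reachable u x₁}, (↑u = z₁ ∨ G'.Adj z₁ ↑u) →
      c₁ u ≠ ι (c₂ ⟨z₂, hz2⟩))
    (H4x : ∀ v : {u | G'.Reachable u x₂}, (↑v = x₂ ∨ G'.Adj x₂ ↑v) →
      ι (c₂ v) ≠ c₁ ⟨x₁, SimpleGraph.Reachable.refl x₁⟩)
    (H4y : ∀ v : {u | G'.Reachable u x₂}, (↑v = y₂ ∨ G'.Adj y₂ ↑v) →
      ι (c₂ v) ≠ c₁ ⟨y₁, hy1⟩)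
    (H4z : ∀ v : {u | G'.Reachable u x₂}, (↑v = z₂ ∨ G'.Adj z₂ ↑v) →
      ι (c₂ v) ≠ c₁ ⟨z₁, hz1⟩) :
    (graphSquare G).Colorable 7 := by
  classical
  have in2 : ∀ u : V, ¬ G'.Reachable u x₁ → G'.Reachable u x₂ :=
    fun u h => (hall u).resolve_left h
  have key : ∀ u v : V, (hu : G'.Reachable u x₁) → (hv : ¬ G'.Reachable v x₁) →
      (G.Adj u v ∨ ∃ w, G.Adj u w ∧ G.Adj w v) →
      c₁ ⟨u, hu⟩ ≠ ι (c₂ ⟨v, in2 v hv⟩) := by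
    intro u v hu hv hpath
    have CE := fun {a b : V} => cut_edge (a := a) (b := b) hG' hsep hy2 hz2
    rcases hpath with hadj | ⟨w, huw, hwv⟩
    · rcases CE hadj hu hv with ⟨rfl, rfl⟩ | ⟨rfl, rfl⟩ | ⟨rfl, rfl⟩
      · exact H3x ⟨u, hu⟩ (Or.inl rfl)
      · exact H3y ⟨u, hu⟩ (Or.inl rfl)
      · exact H3z ⟨u, hu⟩ (Or.inl rfl)
    · by_cases hw : G'.Reachable w x₁
      · rcases CE hwv hw hv with ⟨rfl, rfl⟩ | ⟨rfl, rfl⟩ | ⟨rfl, rfl⟩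
        · exact H3x ⟨u, hu⟩ (Or.inr ((inside_edge hG' hsep hy1 hz1 hy2 hz2 huw
            (Or.inl ⟨hu, hw⟩)).symm))
        · exact H3y ⟨u, hu⟩ (Or.inr ((inside_edge hG' hsep hy1 hz1 hy2 hz2 huw
            (Or.inl ⟨hu, hw⟩)).symm))
        · exact H3z ⟨u, hu⟩ (Or.inr ((inside_edge hG' hsep hy1 hz1 hy2 hz2 huw
            (Or.inl ⟨hu, hw⟩)).symm))
      · rcases CE huw hu hw with ⟨rfl, rfl⟩ | ⟨rfl, rfl⟩ | ⟨rfl, rfl⟩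
        · exact fun h => H4x ⟨v, in2 v hv⟩
            (Or.inr (inside_edge hG' hsep hy1 hz1 hy2 hz2 hwv
              (Or.inr ⟨in2 _ hw, in2 _ hv⟩))) h.symm
        · exact fun h => H4y ⟨v, in2 v hv⟩
            (Or.inr (inside_edge hG' hsep hy1 hz1 hy2 hz2 hwv
              (Or.inr ⟨in2 _ hw, in2 _ hv⟩))) h.symm
        · exact fun h => H4z ⟨v, in2 v hv⟩
            (Or.inr (inside_edge hG' hsep hy1 hz1 hy2 hz2 hwv
              (Or.inr ⟨in2 _ hw, in2 _ hv⟩))) h.symm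
  refine ⟨SimpleGraph.Coloring.mk (fun u =>
    if h : G'.Reachable u x₁ then c₁ ⟨u, h⟩ else ι (c₂ ⟨u, in2 u h⟩)) ?_⟩
  rintro u v ⟨hne, hpath⟩
  by_cases hu : G'.Reachable u x₁ <;> by_cases hv : G'.Reachable v x₁ <;>
    simp only [hu, hv, dite_true, dite_false]
  · -- both in side 1
    refine H1 ⟨u, hu⟩ ⟨v, hv⟩ ⟨by simpa using hne, ?_⟩
    rcases hpath with hadj | ⟨w, huw, hwv⟩
    · exact Or.inl (inside_edge hG' hsep hy1 hz1 hy2 hz2 hadj (Or.inl ⟨hu, hv⟩))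
    · by_cases hw : G'.Reachable w x₁
      · exact Or.inr ⟨⟨w, hw⟩,
          inside_edge hG' hsep hy1 hz1 hy2 hz2 huw (Or.inl ⟨hu, hw⟩),
          inside_edge hG' hsep hy1 hz1 hy2 hz2 hwv (Or.inl ⟨hw, hv⟩)⟩
      · exfalso
        have CE := fun {a b : V} => cut_edge (a := a) (b := b) hG' hsep hy2 hz2
        rcases CE huw hu hw with ⟨h1, h2⟩ | ⟨h1, h2⟩ | ⟨h1, h2⟩ <;>
          rcases CE hwv.symm hv hw with ⟨h3, h4⟩ | ⟨h3, h4⟩ | ⟨h3, h4⟩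
        · exact hne (h1.trans h3.symm)
        · exact h2xy (h2.symm.trans h4)
        · exact h2xz (h2.symm.trans h4)
        · exact h2xy (h4.symm.trans h2)
        · exact hne (h1.trans h3.symm)
        · exact h2yz (h2.symm.trans h4)
        · exact h2xz (h4.symm.trans h2)
        · exact h2yz (h4.symm.trans h2)
        · exact hne (h1.trans h3.symm)
  · exact key u v hu hv hpath
  · exact fun h => key v u hv hu (by
      rcases hpath with h' | ⟨w, h1, h2⟩
      · exact Or.inl h'.symm
      · exact Or.inr ⟨w, h2.symm, h1.symm⟩) h.symm
  · intro h
    refine H2 ⟨u, in2 u hu⟩ ⟨v, in2 v hv⟩ ⟨by simpa using hne, ?_⟩ (hι h)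
    rcases hpath with hadj | ⟨w, huw, hwv⟩
    · exact Or.inl (inside_edge hG' hsep hy1 hz1 hy2 hz2 hadj
        (Or.inr ⟨in2 u hu, in2 v hv⟩))
    · by_cases hw : G'.Reachable w x₁
      · exfalso
        have CE := fun {a b : V} => cut_edge (a := a) (b := b) hG' hsep hy2 hz2
        rcases CE huw.symm hw hu with ⟨h1, h2⟩ | ⟨h1, h2⟩ | ⟨h1, h2⟩ <;>
          rcases CE hwv hw hv with ⟨h3, h4⟩ | ⟨h3, h4⟩ | ⟨h3, h4⟩
        · exact hne (h2.trans h4.symm)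
        · exact h1xy (h1.symm.trans h3)
        · exact h1xz (h1.symm.trans h3)
        · exact h1xy (h3.symm.trans h1)
        · exact hne (h2.trans h4.symm)
        · exact h1yz (h1.symm.trans h3)
        · exact h1xz (h3.symm.trans h1)
        · exact h1yz (h3.symm.trans h1)
        · exact hne (h2.trans h4.symm)
      · exact Or.inr ⟨⟨w, in2 w hw⟩,
          inside_edge hG' hsep hy1 hz1 hy2 hz2 huw (Or.inr ⟨in2 u hu, in2 w hw⟩),
          inside_edge hG' hsep hy1 hz1 hy2 hz2 hwv (Or.inr ⟨in2 w hw, in2 v hv⟩)⟩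

end Glue
section Main
variable {V : Type*}

lemma main_aux (G : SimpleGraph V)
    (hcubic : ∀ u : V, {w | G.Adj u w}.ncard = 3)
    (x₁ x₂ y₁ y₂ z₁ z₂ : V)
    (h1xy : x₁ ≠ y₁) (h1xz : x₁ ≠ z₁) (h1yz : y₁ ≠ z₁)
    (h2xy : x₂ ≠ y₂) (h2xz : x₂ ≠ z₂) (h2yz : y₂ ≠ z₂)
    (hex : G.Adj x₁ x₂) (hey : G.Adj y₁ y₂) (hez : G.Adj z₁ z₂)
    (G' : SimpleGraph V)
    (hG' : G' = G.deleteEdges {s(x₁, x₂), s(y₁, y₂), s(z₁, z₂)})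
    (hsep : ¬ G'.Reachable x₁ x₂)
    (hall : ∀ u : V, G'.Reachable u x₁ ∨ G'.Reachable u x₂)
    (hy1 : G'.Reachable y₁ x₁) (hz1 : G'.Reachable z₁ x₁)
    (hy2 : G'.Reachable y₂ x₂) (hz2 : G'.Reachable z₂ x₂)
    (C1 : (graphSquare (addTriangle (G'.induce {u | G'.Reachable u x₁})
        ⟨x₁, SimpleGraph.Reachable.refl x₁⟩ ⟨y₁, hy1⟩ ⟨z₁, hz1⟩)).Coloring (Fin 7))
    (C2 : (graphSquare (addTriangle (G'.induce {u | G'.Reachable u x₂})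
        ⟨x₂, SimpleGraph.Reachable.refl x₂⟩ ⟨y₂, hy2⟩ ⟨z₂, hz2⟩)).Coloring (Fin 7))
    (D2 : (graphSquare (addVertex (G'.induce {u | G'.Reachable u x₂})
        {⟨x₂, SimpleGraph.Reachable.refl x₂⟩, ⟨y₂, hy2⟩, ⟨z₂, hz2⟩})).Coloring (Fin 7))
    (hcase :
      ¬(C1 (Sum.inl ⟨x₁, SimpleGraph.Reachable.refl x₁⟩) ≠ C1 (Sum.inl ⟨y₁, hy1⟩) ∧
        C1 (Sum.inl ⟨x₁, SimpleGraph.Reachable.refl x₁⟩) ≠ C1 (Sum.inl ⟨z₁, hz1⟩) ∧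
        C1 (Sum.inl ⟨y₁, hy1⟩) ≠ C1 (Sum.inl ⟨z₁, hz1⟩)) ∨
      (C2 (Sum.inl ⟨x₂, SimpleGraph.Reachable.refl x₂⟩) ≠ C2 (Sum.inl ⟨y₂, hy2⟩) ∧
       C2 (Sum.inl ⟨x₂, SimpleGraph.Reachable.refl x₂⟩) ≠ C2 (Sum.inl ⟨z₂, hz2⟩) ∧
       C2 (Sum.inl ⟨y₂, hy2⟩) ≠ C2 (Sum.inl ⟨z₂, hz2⟩))) :
    (graphSquare G).Colorable 7 := by
  classical
  -- side 1 facts from C1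
  have P1 : ∀ u v : {u | G'.Reachable u x₁},
      (graphSquare (G'.induce {u | G'.Reachable u x₁})).Adj u v →
      C1 (Sum.inl u) ≠ C1 (Sum.inl v) :=
    fun u v h => C1.valid (tri_sq_mono _ _ _ _ h)
  have G1x : ∀ u : {u | G'.Reachable u x₁}, (↑u = x₁ ∨ G'.Adj x₁ ↑u) →
      C1 (Sum.inr 0) ≠ C1 (Sum.inl u) := by
    intro u hu
    refine C1.valid (tri_sq_ghost_nbhd_a _ _ _ _ ?_)
    rcases hu with h | h
    · exact Or.inl (Subtype.ext h)
    · exact Or.inr h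
  have G1y : ∀ u : {u | G'.Reachable u x₁}, (↑u = y₁ ∨ G'.Adj y₁ ↑u) →
      C1 (Sum.inr 1) ≠ C1 (Sum.inl u) := by
    intro u hu
    refine C1.valid (tri_sq_ghost_nbhd_b _ _ _ _ ?_)
    rcases hu with h | h
    · exact Or.inl (Subtype.ext h)
    · exact Or.inr h
  have G1z : ∀ u : {u | G'.Reachable u x₁}, (↑u = z₁ ∨ G'.Adj z₁ ↑u) →
      C1 (Sum.inr 2) ≠ C1 (Sum.inl u) := by
    intro u hu
    refine C1.valid (tri_sq_ghost_nbhd_c _ _ _ _ ?_)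
    rcases hu with h | h
    · exact Or.inl (Subtype.ext h)
    · exact Or.inr h
  have GB1 : ∀ i : Fin 3, ∀ p : {u | G'.Reachable u x₁},
      (↑p = x₁ ∨ ↑p = y₁ ∨ ↑p = z₁) → C1 (Sum.inr i) ≠ C1 (Sum.inl p) := by
    intro i p hp
    refine C1.valid (tri_sq_ghost_boundary _ _ _ _ i p ?_)
    rcases hp with h | h | h
    · exact Or.inl (Subtype.ext h)
    · exact Or.inr (Or.inl (Subtype.ext h))
    · exact Or.inr (Or.inr (Subtype.ext h))
  have GG1 : ∀ i j : Fin 3, i ≠ j → C1 (Sum.inr i) ≠ C1 (Sum.inr j) :=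
    fun i j h => C1.valid (tri_sq_ghosts _ _ _ _ h)
  -- side 2 facts from C2
  have P2 : ∀ u v : {u | G'.Reachable u x₂},
      (graphSquare (G'.induce {u | G'.Reachable u x₂})).Adj u v →
      C2 (Sum.inl u) ≠ C2 (Sum.inl v) :=
    fun u v h => C2.valid (tri_sq_mono _ _ _ _ h)
  have G2x : ∀ v : {u | G'.Reachable u x₂}, (↑v = x₂ ∨ G'.Adj x₂ ↑v) →
      C2 (Sum.inr 0) ≠ C2 (Sum.inl v) := by
    intro v hv
    refine C2.valid (tri_sq_ghost_nbhd_a _ _ _ _ ?_)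
    rcases hv with h | h
    · exact Or.inl (Subtype.ext h)
    · exact Or.inr h
  have G2y : ∀ v : {u | G'.Reachable u x₂}, (↑v = y₂ ∨ G'.Adj y₂ ↑v) →
      C2 (Sum.inr 1) ≠ C2 (Sum.inl v) := by
    intro v hv
    refine C2.valid (tri_sq_ghost_nbhd_b _ _ _ _ ?_)
    rcases hv with h | h
    · exact Or.inl (Subtype.ext h)
    · exact Or.inr h
  have G2z : ∀ v : {u | G'.Reachable u x₂}, (↑v = z₂ ∨ G'.Adj z₂ ↑v) →
      C2 (Sum.inr 2) ≠ C2 (Sum.inl v) := by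
    intro v hv
    refine C2.valid (tri_sq_ghost_nbhd_c _ _ _ _ ?_)
    rcases hv with h | h
    · exact Or.inl (Subtype.ext h)
    · exact Or.inr h
  have GB2 : ∀ i : Fin 3, ∀ p : {u | G'.Reachable u x₂},
      (↑p = x₂ ∨ ↑p = y₂ ∨ ↑p = z₂) → C2 (Sum.inr i) ≠ C2 (Sum.inl p) := by
    intro i p hp
    refine C2.valid (tri_sq_ghost_boundary _ _ _ _ i p ?_)
    rcases hp with h | h | h
    · exact Or.inl (Subtype.ext h)
    · exact Or.inr (Or.inl (Subtype.ext h))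
    · exact Or.inr (Or.inr (Subtype.ext h))
  have GG2 : ∀ i j : Fin 3, i ≠ j → C2 (Sum.inr i) ≠ C2 (Sum.inr j) :=
    fun i j h => C2.valid (tri_sq_ghosts _ _ _ _ h)
  -- side 2 facts from D2
  have hmx : (⟨x₂, SimpleGraph.Reachable.refl x₂⟩ : {u | G'.Reachable u x₂}) ∈
      ({⟨x₂, SimpleGraph.Reachable.refl x₂⟩, ⟨y₂, hy2⟩, ⟨z₂, hz2⟩} :
        Set {u | G'.Reachable u x₂}) := Set.mem_insert _ _
  have hmy : (⟨y₂, hy2⟩ : {u | G'.Reachable u x₂}) ∈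
      ({⟨x₂, SimpleGraph.Reachable.refl x₂⟩, ⟨y₂, hy2⟩, ⟨z₂, hz2⟩} :
        Set {u | G'.Reachable u x₂}) :=
    Set.mem_insert_of_mem _ (Set.mem_insert _ _)
  have hmz : (⟨z₂, hz2⟩ : {u | G'.Reachable u x₂}) ∈
      ({⟨x₂, SimpleGraph.Reachable.refl x₂⟩, ⟨y₂, hy2⟩, ⟨z₂, hz2⟩} :
        Set {u | G'.Reachable u x₂}) :=
    Set.mem_insert_of_mem _ (Set.mem_insert_of_mem _ rfl)
  have P2' : ∀ u v : {u | G'.Reachable u x₂},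
      (graphSquare (G'.induce {u | G'.Reachable u x₂})).Adj u v →
      D2 (some u) ≠ D2 (some v) :=
    fun u v h => D2.valid (av_sq_mono _ _ h)
  have HVx : ∀ v : {u | G'.Reachable u x₂}, (↑v = x₂ ∨ G'.Adj x₂ ↑v) →
      D2 none ≠ D2 (some v) := by
    intro v hv
    refine D2.valid (av_sq_ghost_nbhd _ _ hmx ?_)
    rcases hv with h | h
    · exact Or.inl (Subtype.ext h)
    · exact Or.inr h
  have HVy : ∀ v : {u | G'.Reachable u x₂}, (↑v = y₂ ∨ G'.Adj y₂ ↑v) →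
      D2 none ≠ D2 (some v) := by
    intro v hv
    refine D2.valid (av_sq_ghost_nbhd _ _ hmy ?_)
    rcases hv with h | h
    · exact Or.inl (Subtype.ext h)
    · exact Or.inr h
  have HVz : ∀ v : {u | G'.Reachable u x₂}, (↑v = z₂ ∨ G'.Adj z₂ ↑v) →
      D2 none ≠ D2 (some v) := by
    intro v hv
    refine D2.valid (av_sq_ghost_nbhd _ _ hmz ?_)
    rcases hv with h | h
    · exact Or.inl (Subtype.ext h)
    · exact Or.inr h
  have sxy : (⟨x₂, SimpleGraph.Reachable.refl x₂⟩ : {u | G'.Reachable u x₂}) ≠ ⟨y₂, hy2⟩ :=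
    fun h => h2xy (congrArg Subtype.val h)
  have sxz : (⟨x₂, SimpleGraph.Reachable.refl x₂⟩ : {u | G'.Reachable u x₂}) ≠ ⟨z₂, hz2⟩ :=
    fun h => h2xz (congrArg Subtype.val h)
  have syz : (⟨y₂, hy2⟩ : {u | G'.Reachable u x₂}) ≠ ⟨z₂, hz2⟩ :=
    fun h => h2yz (congrArg Subtype.val h)
  have BDxy : D2 (some ⟨x₂, SimpleGraph.Reachable.refl x₂⟩) ≠ D2 (some ⟨y₂, hy2⟩) :=
    D2.valid (av_sq_boundary _ _ hmx hmy sxy)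
  have BDxz : D2 (some ⟨x₂, SimpleGraph.Reachable.refl x₂⟩) ≠ D2 (some ⟨z₂, hz2⟩) :=
    D2.valid (av_sq_boundary _ _ hmx hmz sxz)
  have BDyz : D2 (some ⟨y₂, hy2⟩) ≠ D2 (some ⟨z₂, hz2⟩) :=
    D2.valid (av_sq_boundary _ _ hmy hmz syz)
  have HBx : D2 none ≠ D2 (some ⟨x₂, SimpleGraph.Reachable.refl x₂⟩) :=
    HVx _ (Or.inl rfl)
  have HBy : D2 none ≠ D2 (some ⟨y₂, hy2⟩) := HVy _ (Or.inl rfl)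
  have HBz : D2 none ≠ D2 (some ⟨z₂, hz2⟩) := HVz _ (Or.inl rfl)
  -- nonmemberships for fresh_avoid
  have hx1n : x₁ ∉ {u | G'.Reachable u x₂} := hsep
  have hy1n : y₁ ∉ {u | G'.Reachable u x₂} := fun h => hsep (hy1.symm.trans h)
  have hz1n : z₁ ∉ {u | G'.Reachable u x₂} := fun h => hsep (hz1.symm.trans h)
  have hsub : ∀ a b : V, G'.Adj a b → G.Adj a b := by
    intro a b h; rw [hG'] at h; exact h.1
  -- abbreviations for boundary colors
  by_cases hab : C1 (Sum.inl ⟨x₁, SimpleGraph.Reachable.refl x₁⟩) = C1 (Sum.inl ⟨y₁, hy1⟩)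
  · by_cases hac : C1 (Sum.inl ⟨x₁, SimpleGraph.Reachable.refl x₁⟩) = C1 (Sum.inl ⟨z₁, hz1⟩)
    · -- case B1 : all three equal
      obtain ⟨π, hπ⟩ := perm_extend
        [(D2 (some ⟨x₂, SimpleGraph.Reachable.refl x₂⟩), C1 (Sum.inr 0)),
         (D2 (some ⟨y₂, hy2⟩), C1 (Sum.inr 1)),
         (D2 (some ⟨z₂, hz2⟩), C1 (Sum.inr 2)),
         (D2 none, C1 (Sum.inl ⟨x₁, SimpleGraph.Reachable.refl x₁⟩))]
        (nodup4 BDxy BDxz (Ne.symm HBx) BDyz (Ne.symm HBy) (Ne.symm HBz))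
        (nodup4 (GG1 0 1 (by decide)) (GG1 0 2 (by decide))
          (GB1 0 _ (Or.inl rfl)) (GG1 1 2 (by decide))
          (GB1 1 _ (Or.inl rfl)) (GB1 2 _ (Or.inl rfl)))
      refine glue h1xy h1xz h1yz h2xy h2xz h2yz hG' hsep hall hy1 hz1 hy2 hz2
        (fun u => C1 (Sum.inl u)) (fun v => D2 (some v)) π π.injective P1 P2'
        ?_ ?_ ?_ ?_ ?_ ?_
      · intro u hu
        exact fun hh => (G1x u hu) (hh.trans (hπ _ (List.Mem.head _))).symm
      · intro u hu
        exact fun hh => (G1y u hu) (hh.trans (hπ _ (List.Mem.tail _ (List.Mem.head _)))).symm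
      · intro u hu
        exact fun hh => (G1z u hu) (hh.trans (hπ _ (List.Mem.tail _ (List.Mem.tail _ (List.Mem.head _))))).symm
      · intro v hv
        exact fun hh => (HVx v hv) (π.injective ((hπ _ (List.Mem.tail _ (List.Mem.tail _ (List.Mem.tail _ (List.Mem.head _))))).trans hh.symm))
      · intro v hv
        exact fun hh => (HVy v hv) (π.injective ((hπ _ (List.Mem.tail _ (List.Mem.tail _ (List.Mem.tail _ (List.Mem.head _))))).trans (hab.trans hh.symm)))
      · intro v hv
        exact fun hh => (HVz v hv) (π.injective ((hπ _ (List.Mem.tail _ (List.Mem.tail _ (List.Mem.tail _ (List.Mem.head _))))).trans (hac.trans hh.symm)))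
    · -- case B2 : α = β ≠ γ
      obtain ⟨t, ht1, ht2, ht3, htv⟩ := fresh_avoid hsub (hcubic z₂)
        (fun v => D2 (some v)) hez.symm hz2 hz1n
        (D2 (some ⟨x₂, SimpleGraph.Reachable.refl x₂⟩)) (D2 (some ⟨y₂, hy2⟩)) (D2 none)
      obtain ⟨π, hπ⟩ := perm_extend
        [(D2 (some ⟨x₂, SimpleGraph.Reachable.refl x₂⟩), C1 (Sum.inr 0)),
         (D2 (some ⟨y₂, hy2⟩), C1 (Sum.inr 1)),
         (D2 (some ⟨z₂, hz2⟩), C1 (Sum.inr 2)),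
         (D2 none, C1 (Sum.inl ⟨x₁, SimpleGraph.Reachable.refl x₁⟩)),
         (t, C1 (Sum.inl ⟨z₁, hz1⟩))]
        (nodup5 BDxy BDxz (Ne.symm HBx) (Ne.symm ht1) BDyz (Ne.symm HBy)
          (Ne.symm ht2) (Ne.symm HBz) (Ne.symm (htv _ (Or.inl rfl))) (Ne.symm ht3))
        (nodup5 (GG1 0 1 (by decide)) (GG1 0 2 (by decide))
          (GB1 0 _ (Or.inl rfl)) (GB1 0 _ (Or.inr (Or.inr rfl)))
          (GG1 1 2 (by decide)) (GB1 1 _ (Or.inl rfl)) (GB1 1 _ (Or.inr (Or.inr rfl)))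
          (GB1 2 _ (Or.inl rfl)) (GB1 2 _ (Or.inr (Or.inr rfl))) hac)
      refine glue h1xy h1xz h1yz h2xy h2xz h2yz hG' hsep hall hy1 hz1 hy2 hz2
        (fun u => C1 (Sum.inl u)) (fun v => D2 (some v)) π π.injective P1 P2'
        ?_ ?_ ?_ ?_ ?_ ?_
      · intro u hu
        exact fun hh => (G1x u hu) (hh.trans (hπ _ (List.Mem.head _))).symm
      · intro u hu
        exact fun hh => (G1y u hu) (hh.trans (hπ _ (List.Mem.tail _ (List.Mem.head _)))).symm
      · intro u hu
        exact fun hh => (G1z u hu) (hh.trans (hπ _ (List.Mem.tail _ (List.Mem.tail _ (List.Mem.head _))))).symm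
      · intro v hv
        exact fun hh => (HVx v hv) (π.injective ((hπ _ (List.Mem.tail _ (List.Mem.tail _ (List.Mem.tail _ (List.Mem.head _))))).trans hh.symm))
      · intro v hv
        exact fun hh => (HVy v hv) (π.injective ((hπ _ (List.Mem.tail _ (List.Mem.tail _ (List.Mem.tail _ (List.Mem.head _))))).trans (hab.trans hh.symm)))
      · intro v hv
        exact fun hh => (htv v hv) (π.injective ((hπ _ (List.Mem.tail _ (List.Mem.tail _ (List.Mem.tail _ (List.Mem.tail _ (List.Mem.head _)))))).trans hh.symm))
  · by_cases hac : C1 (Sum.inl ⟨x₁, SimpleGraph.Reachable.refl x₁⟩) = C1 (Sum.inl ⟨z₁, hz1⟩)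
    · -- case B3 : α = γ ≠ β
      obtain ⟨t, ht1, ht2, ht3, htv⟩ := fresh_avoid hsub (hcubic y₂)
        (fun v => D2 (some v)) hey.symm hy2 hy1n
        (D2 (some ⟨x₂, SimpleGraph.Reachable.refl x₂⟩)) (D2 (some ⟨z₂, hz2⟩)) (D2 none)
      obtain ⟨π, hπ⟩ := perm_extend
        [(D2 (some ⟨x₂, SimpleGraph.Reachable.refl x₂⟩), C1 (Sum.inr 0)),
         (D2 (some ⟨y₂, hy2⟩), C1 (Sum.inr 1)),
         (D2 (some ⟨z₂, hz2⟩), C1 (Sum.inr 2)),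
         (D2 none, C1 (Sum.inl ⟨x₁, SimpleGraph.Reachable.refl x₁⟩)),
         (t, C1 (Sum.inl ⟨y₁, hy1⟩))]
        (nodup5 BDxy BDxz (Ne.symm HBx) (Ne.symm ht1) BDyz (Ne.symm HBy)
          (Ne.symm (htv _ (Or.inl rfl))) (Ne.symm HBz) (Ne.symm ht2) (Ne.symm ht3))
        (nodup5 (GG1 0 1 (by decide)) (GG1 0 2 (by decide))
          (GB1 0 _ (Or.inl rfl)) (GB1 0 _ (Or.inr (Or.inl rfl)))
          (GG1 1 2 (by decide)) (GB1 1 _ (Or.inl rfl)) (GB1 1 _ (Or.inr (Or.inl rfl)))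
          (GB1 2 _ (Or.inl rfl)) (GB1 2 _ (Or.inr (Or.inl rfl))) hab)
      refine glue h1xy h1xz h1yz h2xy h2xz h2yz hG' hsep hall hy1 hz1 hy2 hz2
        (fun u => C1 (Sum.inl u)) (fun v => D2 (some v)) π π.injective P1 P2'
        ?_ ?_ ?_ ?_ ?_ ?_
      · intro u hu
        exact fun hh => (G1x u hu) (hh.trans (hπ _ (List.Mem.head _))).symm
      · intro u hu
        exact fun hh => (G1y u hu) (hh.trans (hπ _ (List.Mem.tail _ (List.Mem.head _)))).symm
      · intro u hu
        exact fun hh => (G1z u hu) (hh.trans (hπ _ (List.Mem.tail _ (List.Mem.tail _ (List.Mem.head _))))).symm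
      · intro v hv
        exact fun hh => (HVx v hv) (π.injective ((hπ _ (List.Mem.tail _ (List.Mem.tail _ (List.Mem.tail _ (List.Mem.head _))))).trans hh.symm))
      · intro v hv
        exact fun hh => (htv v hv) (π.injective ((hπ _ (List.Mem.tail _ (List.Mem.tail _ (List.Mem.tail _ (List.Mem.tail _ (List.Mem.head _)))))).trans hh.symm))
      · intro v hv
        exact fun hh => (HVz v hv) (π.injective ((hπ _ (List.Mem.tail _ (List.Mem.tail _ (List.Mem.tail _ (List.Mem.head _))))).trans (hac.trans hh.symm)))
    · by_cases hbc : C1 (Sum.inl ⟨y₁, hy1⟩) = C1 (Sum.inl ⟨z₁, hz1⟩)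
      · -- case B4 : β = γ ≠ α
        obtain ⟨t, ht1, ht2, ht3, htv⟩ := fresh_avoid hsub (hcubic x₂)
          (fun v => D2 (some v)) hex.symm (SimpleGraph.Reachable.refl x₂) hx1n
          (D2 (some ⟨y₂, hy2⟩)) (D2 (some ⟨z₂, hz2⟩)) (D2 none)
        obtain ⟨π, hπ⟩ := perm_extend
          [(D2 (some ⟨x₂, SimpleGraph.Reachable.refl x₂⟩), C1 (Sum.inr 0)),
         (D2 (some ⟨y₂, hy2⟩), C1 (Sum.inr 1)),
         (D2 (some ⟨z₂, hz2⟩), C1 (Sum.inr 2)),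
           (D2 none, C1 (Sum.inl ⟨y₁, hy1⟩)),
           (t, C1 (Sum.inl ⟨x₁, SimpleGraph.Reachable.refl x₁⟩))]
          (nodup5 BDxy BDxz (Ne.symm HBx) (Ne.symm (htv _ (Or.inl rfl))) BDyz
            (Ne.symm HBy) (Ne.symm ht1) (Ne.symm HBz) (Ne.symm ht2) (Ne.symm ht3))
          (nodup5 (GG1 0 1 (by decide)) (GG1 0 2 (by decide))
            (GB1 0 _ (Or.inr (Or.inl rfl))) (GB1 0 _ (Or.inl rfl))
            (GG1 1 2 (by decide)) (GB1 1 _ (Or.inr (Or.inl rfl))) (GB1 1 _ (Or.inl rfl))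
            (GB1 2 _ (Or.inr (Or.inl rfl))) (GB1 2 _ (Or.inl rfl))
            (fun h => hab h.symm))
        refine glue h1xy h1xz h1yz h2xy h2xz h2yz hG' hsep hall hy1 hz1 hy2 hz2
          (fun u => C1 (Sum.inl u)) (fun v => D2 (some v)) π π.injective P1 P2'
          ?_ ?_ ?_ ?_ ?_ ?_
        · intro u hu
          exact fun hh => (G1x u hu) (hh.trans (hπ _ (List.Mem.head _))).symm
        · intro u hu
          exact fun hh => (G1y u hu) (hh.trans (hπ _ (List.Mem.tail _ (List.Mem.head _)))).symm
        · intro u hu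
          exact fun hh => (G1z u hu) (hh.trans (hπ _ (List.Mem.tail _ (List.Mem.tail _ (List.Mem.head _))))).symm
        · intro v hv
          exact fun hh => (htv v hv) (π.injective ((hπ _ (List.Mem.tail _ (List.Mem.tail _ (List.Mem.tail _ (List.Mem.tail _ (List.Mem.head _)))))).trans hh.symm))
        · intro v hv
          exact fun hh => (HVy v hv) (π.injective ((hπ _ (List.Mem.tail _ (List.Mem.tail _ (List.Mem.tail _ (List.Mem.head _))))).trans hh.symm))
        · intro v hv
          exact fun hh => (HVz v hv) (π.injective ((hπ _ (List.Mem.tail _ (List.Mem.tail _ (List.Mem.tail _ (List.Mem.head _))))).trans (hbc.trans hh.symm)))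
      · -- case A : side 1 rainbow, so side 2 must be rainbow
        have r2 := hcase.resolve_left (fun hn => hn ⟨hab, hac, hbc⟩)
        obtain ⟨rxy, rxz, ryz⟩ := r2
        obtain ⟨π, hπ⟩ := perm_extend
          [(C2 (Sum.inl ⟨x₂, SimpleGraph.Reachable.refl x₂⟩), C1 (Sum.inr 0)),
           (C2 (Sum.inl ⟨y₂, hy2⟩), C1 (Sum.inr 1)),
           (C2 (Sum.inl ⟨z₂, hz2⟩), C1 (Sum.inr 2)),
           (C2 (Sum.inr 0), C1 (Sum.inl ⟨x₁, SimpleGraph.Reachable.refl x₁⟩)),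
           (C2 (Sum.inr 1), C1 (Sum.inl ⟨y₁, hy1⟩)),
           (C2 (Sum.inr 2), C1 (Sum.inl ⟨z₁, hz1⟩))]
          (nodup6 rxy rxz (Ne.symm (GB2 0 _ (Or.inl rfl)))
            (Ne.symm (GB2 1 _ (Or.inl rfl))) (Ne.symm (GB2 2 _ (Or.inl rfl)))
            ryz (Ne.symm (GB2 0 _ (Or.inr (Or.inl rfl))))
            (Ne.symm (GB2 1 _ (Or.inr (Or.inl rfl))))
            (Ne.symm (GB2 2 _ (Or.inr (Or.inl rfl))))
            (Ne.symm (GB2 0 _ (Or.inr (Or.inr rfl))))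
            (Ne.symm (GB2 1 _ (Or.inr (Or.inr rfl))))
            (Ne.symm (GB2 2 _ (Or.inr (Or.inr rfl))))
            (GG2 0 1 (by decide)) (GG2 0 2 (by decide)) (GG2 1 2 (by decide)))
          (nodup6 (GG1 0 1 (by decide)) (GG1 0 2 (by decide))
            (GB1 0 _ (Or.inl rfl)) (GB1 0 _ (Or.inr (Or.inl rfl)))
            (GB1 0 _ (Or.inr (Or.inr rfl)))
            (GG1 1 2 (by decide)) (GB1 1 _ (Or.inl rfl))
            (GB1 1 _ (Or.inr (Or.inl rfl))) (GB1 1 _ (Or.inr (Or.inr rfl)))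
            (GB1 2 _ (Or.inl rfl)) (GB1 2 _ (Or.inr (Or.inl rfl)))
            (GB1 2 _ (Or.inr (Or.inr rfl)))
            hab hac hbc)
        refine glue h1xy h1xz h1yz h2xy h2xz h2yz hG' hsep hall hy1 hz1 hy2 hz2
          (fun u => C1 (Sum.inl u)) (fun v => C2 (Sum.inl v)) π π.injective P1 P2
          ?_ ?_ ?_ ?_ ?_ ?_
        · intro u hu
          exact fun hh => (G1x u hu) (hh.trans (hπ _ (List.Mem.head _))).symm
        · intro u hu
          exact fun hh => (G1y u hu) (hh.trans (hπ _ (List.Mem.tail _ (List.Mem.head _)))).symm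
        · intro u hu
          exact fun hh => (G1z u hu) (hh.trans (hπ _ (List.Mem.tail _ (List.Mem.tail _ (List.Mem.head _))))).symm
        · intro v hv
          exact fun hh => (G2x v hv) (π.injective ((hπ _ (List.Mem.tail _ (List.Mem.tail _ (List.Mem.tail _ (List.Mem.head _))))).trans hh.symm))
        · intro v hv
          exact fun hh => (G2y v hv) (π.injective ((hπ _ (List.Mem.tail _ (List.Mem.tail _ (List.Mem.tail _ (List.Mem.tail _ (List.Mem.head _)))))).trans hh.symm))
        · intro v hv
          exact fun hh => (G2z v hv) (π.injective ((hπ _ (List.Mem.tail _ (List.Mem.tail _ (List.Mem.tail _ (List.Mem.tail _ (List.Mem.tail _ (List.Mem.head _))))))).trans hh.symm))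

end Main

/-- Let `G` be a cubic graph with three edges `x₁x₂`, `y₁y₂`, `z₁z₂` whose
deletion leaves exactly two components `G₁ ∋ x₁, y₁, z₁` and `G₂ ∋ x₂, y₂, z₂`,
each with at least four vertices. For `i = 1, 2`, let `Gᵢ'` be `Gᵢ` plus a new
vertex joined to `xᵢ, yᵢ, zᵢ`, and `Gᵢ''` be `Gᵢ` plus a new triangle matched
to `xᵢ, yᵢ, zᵢ`. If the squares of `G₁'`, `G₂'`, `G₁''`, `G₂''` are all
`7`-colorable, then `G²` is `7`-colorable. -/
theorem colorable_square_of_three_edge_cut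
    {V : Type*} [Fintype V] (G : SimpleGraph V)
    (hcubic : ∀ u : V, {w | G.Adj u w}.ncard = 3)
    (x₁ x₂ y₁ y₂ z₁ z₂ : V)
    (h1d : ([x₁, y₁, z₁] : List V).Pairwise (· ≠ ·))
    (h2d : ([x₂, y₂, z₂] : List V).Pairwise (· ≠ ·))
    (hex : G.Adj x₁ x₂) (hey : G.Adj y₁ y₂) (hez : G.Adj z₁ z₂)
    (G' : SimpleGraph V)
    (hG' : G' = G.deleteEdges {s(x₁, x₂), s(y₁, y₂), s(z₁, z₂)})
    (hsep : ¬ G'.Reachable x₁ x₂)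
    (hall : ∀ u : V, G'.Reachable u x₁ ∨ G'.Reachable u x₂)
    (hy1 : G'.Reachable y₁ x₁) (hz1 : G'.Reachable z₁ x₁)
    (hy2 : G'.Reachable y₂ x₂) (hz2 : G'.Reachable z₂ x₂)
    (hcard1 : 4 ≤ {u | G'.Reachable u x₁}.ncard)
    (hcard2 : 4 ≤ {u | G'.Reachable u x₂}.ncard)
    (hG1' : (graphSquare (addVertex (G'.induce {u | G'.Reachable u x₁})
        {⟨x₁, SimpleGraph.Reachable.refl x₁⟩, ⟨y₁, hy1⟩, ⟨z₁, hz1⟩})).Colorable 7)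
    (hG2' : (graphSquare (addVertex (G'.induce {u | G'.Reachable u x₂})
        {⟨x₂, SimpleGraph.Reachable.refl x₂⟩, ⟨y₂, hy2⟩, ⟨z₂, hz2⟩})).Colorable 7)
    (hG1'' : (graphSquare (addTriangle (G'.induce {u | G'.Reachable u x₁})
        ⟨x₁, SimpleGraph.Reachable.refl x₁⟩ ⟨y₁, hy1⟩ ⟨z₁, hz1⟩)).Colorable 7)
    (hG2'' : (graphSquare (addTriangle (G'.induce {u | G'.Reachable u x₂})
        ⟨x₂, SimpleGraph.Reachable.refl x₂⟩ ⟨y₂, hy2⟩ ⟨z₂, hz2⟩)).Colorable 7) :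
    (graphSquare G).Colorable 7 := by
  
  classical
  simp only [List.pairwise_cons, List.mem_cons, List.mem_singleton,
    List.not_mem_nil, List.Pairwise.nil] at h1d h2d
  obtain ⟨h1a, h1b, -⟩ := h1d
  obtain ⟨h2a, h2b, -⟩ := h2d
  have h1xy : x₁ ≠ y₁ := h1a y₁ (Or.inl rfl)
  have h1xz : x₁ ≠ z₁ := h1a z₁ (Or.inr (Or.inl rfl))
  have h1yz : y₁ ≠ z₁ := h1b z₁ (Or.inl rfl)
  have h2xy : x₂ ≠ y₂ := h2a y₂ (Or.inl rfl)
  have h2xz : x₂ ≠ z₂ := h2a z₂ (Or.inr (Or.inl rfl))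
  have h2yz : y₂ ≠ z₂ := h2b z₂ (Or.inl rfl)
  obtain ⟨C1⟩ := hG1''
  obtain ⟨C2⟩ := hG2''
  obtain ⟨D1⟩ := hG1'
  obtain ⟨D2⟩ := hG2'
  by_cases hc :
      ¬(C1 (Sum.inl ⟨x₁, SimpleGraph.Reachable.refl x₁⟩) ≠ C1 (Sum.inl ⟨y₁, hy1⟩) ∧
        C1 (Sum.inl ⟨x₁, SimpleGraph.Reachable.refl x₁⟩) ≠ C1 (Sum.inl ⟨z₁, hz1⟩) ∧
        C1 (Sum.inl ⟨y₁, hy1⟩) ≠ C1 (Sum.inl ⟨z₁, hz1⟩)) ∨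
      (C2 (Sum.inl ⟨x₂, SimpleGraph.Reachable.refl x₂⟩) ≠ C2 (Sum.inl ⟨y₂, hy2⟩) ∧
       C2 (Sum.inl ⟨x₂, SimpleGraph.Reachable.refl x₂⟩) ≠ C2 (Sum.inl ⟨z₂, hz2⟩) ∧
       C2 (Sum.inl ⟨y₂, hy2⟩) ≠ C2 (Sum.inl ⟨z₂, hz2⟩))
  · exact main_aux G hcubic x₁ x₂ y₁ y₂ z₁ z₂ h1xy h1xz h1yz h2xy h2xz h2yz
      hex hey hez G' hG' hsep hall hy1 hz1 hy2 hz2 C1 C2 D2 hc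
  · rw [not_or] at hc
    obtain ⟨hr1, hr2⟩ := hc
    have hG's : G' = G.deleteEdges {s(x₂, x₁), s(y₂, y₁), s(z₂, z₁)} := by
      rw [hG', Sym2.eq_swap (a := x₁), Sym2.eq_swap (a := y₁), Sym2.eq_swap (a := z₁)]
    exact main_aux G hcubic x₂ x₁ y₂ y₁ z₂ z₁ h2xy h2xz h2yz h1xy h1xz h1yz
      hex.symm hey.symm hez.symm G' hG's (fun h => hsep h.symm)
      (fun u => (hall u).symm) hy2 hz2 hy1 hz1 C2 C1 D1 (Or.inl hr2)
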